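/- Let (Σ, θ) be a topological space. The subword topology on Σ*, generated by the sets [U₁,…,U_n] := Σ*U₁Σ*⋯Σ*U_nΣ* for U_i open in θ, is the least fixed point of the function E mapping a topology τ on Σ* to the topology generated by the sets ↑_{≤*}(UV) for U, V ∈ τ and ↑_{≤*}(W) for W ∈ θ. -/

import Mathlib

/-- A topology is Noetherian when every subset is compact. -/
def Noeth {X : Type*} (t : TopologicalSpace X) : Prop :=
  ∀ s : Set X, @IsCompact X t s

/-- Concatenation of sets of words: `UV = { uv : u ∈ U, v ∈ V }`. -/
def cat {α : Type*} (U V : Set (List α)) : Set (List α) :=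
  {w | ∃ u ∈ U, ∃ v ∈ V, w = u ++ v}

/-- A set of letters viewed as a set of length-1 words. -/
def lift1 {α : Type*} (U : Set α) : Set (List α) :=
  {w | ∃ a ∈ U, w = [a]}

/-- The specialisation preorder of a topology. -/
def specLe {α : Type*} (θ : TopologicalSpace α) (x y : α) : Prop :=
  ∀ U : Set α, θ.IsOpen U → x ∈ U → y ∈ U

/-- The word embedding (subword) quasi-order induced by the specialisation
preorder of `θ`. -/
def wordEmb {α : Type*} (θ : TopologicalSpace α) : List α → List α → Prop :=
  List.SublistForall₂ (specLe θ)

/-- Upward closure with respect to the word embedding quasi-order. -/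
def upEmb {α : Type*} (θ : TopologicalSpace α) (S : Set (List α)) : Set (List α) :=
  {w | ∃ u ∈ S, wordEmb θ u w}

/-- The refinement function for the subword topology: it maps `τ` to the topology
generated by the sets `↑(UV)` for `U, V ∈ τ` and `↑W` for `W ∈ θ`. -/
def Esub {α : Type*} (θ : TopologicalSpace α) (τ : TopologicalSpace (List α)) :
    TopologicalSpace (List α) :=
  TopologicalSpace.generateFrom
    ({W | ∃ U V : Set (List α), τ.IsOpen U ∧ τ.IsOpen V ∧ W = upEmb θ (cat U V)} ∪
     {W' | ∃ W : Set α, θ.IsOpen W ∧ W' = upEmb θ (lift1 W)})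

/-- The set of words `Σ* U₁ Σ* U₂ ⋯ Σ* Uₙ Σ*`. -/
def openword {α : Type*} (L : List (Set α)) : Set (List α) :=
  L.foldr (fun U acc => cat Set.univ (cat (lift1 U) acc)) Set.univ

/-- The subword topology on `Σ*`. -/
def subwordTop {α : Type*} (θ : TopologicalSpace α) : TopologicalSpace (List α) :=
  TopologicalSpace.generateFrom
    {V | ∃ L : List (Set α), (∀ U ∈ L, θ.IsOpen U) ∧ V = openword L}

section Aux

open List TopologicalSpace

variable {α β γ : Type*}

theorem sfa_cons_iff {r : α → β → Prop} {x : α} {L : List α} {w : List β} :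
    SublistForall₂ r (x :: L) w ↔
      ∃ w1 b w2, w = w1 ++ b :: w2 ∧ r x b ∧ SublistForall₂ r L w2 := by
  constructor
  · intro h
    induction w with
    | nil => cases h
    | cons c w ih =>
      cases h with
      | cons hr htail => exact ⟨[], c, w, rfl, hr, htail⟩
      | cons_right h' =>
        obtain ⟨w1, b, w2, rfl, hb, hL⟩ := ih h'
        exact ⟨c :: w1, b, w2, rfl, hb, hL⟩
  · rintro ⟨w1, b, w2, rfl, hb, hL⟩
    induction w1 with
    | nil => exact .cons hb hL
    | cons c w1 ih => exact .cons_right ih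

theorem sfa_pad {r : α → β → Prop} {M : List α} {v : List β}
    (u : List β) (h : SublistForall₂ r M v) : SublistForall₂ r M (u ++ v) := by
  induction u with
  | nil => exact h
  | cons c u ih => exact .cons_right ih

theorem sfa_append {r : α → β → Prop} {L M : List α} {u v : List β}
    (h1 : SublistForall₂ r L u) (h2 : SublistForall₂ r M v) :
    SublistForall₂ r (L ++ M) (u ++ v) := by
  induction h1 with
  | nil => exact sfa_pad _ h2
  | cons hr _ ih => exact .cons hr ih
  | cons_right _ ih => exact .cons_right ih

theorem sfa_append_right {r : α → β → Prop} {L : List α} {u : List β} (v : List β)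
    (h : SublistForall₂ r L u) : SublistForall₂ r L (u ++ v) := by
  induction h with
  | nil => exact .nil
  | cons hr _ ih => exact .cons hr ih
  | cons_right _ ih => exact .cons_right ih

theorem sfa_refl {r : α → α → Prop} (hr : ∀ a, r a a) (l : List α) :
    SublistForall₂ r l l := by
  induction l with
  | nil => exact .nil
  | cons a l ih => exact .cons (hr a) ih

theorem sfa_split {r : α → β → Prop} {L M : List α} {w : List β}
    (h : SublistForall₂ r (L ++ M) w) :
    ∃ u v, w = u ++ v ∧ SublistForall₂ r L u ∧ SublistForall₂ r M v := by
  induction L generalizing w with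
  | nil => exact ⟨[], w, rfl, .nil, h⟩
  | cons x L ih =>
    rw [List.cons_append] at h
    obtain ⟨w1, b, w2, rfl, hb, h2⟩ := sfa_cons_iff.mp h
    obtain ⟨u, v, rfl, hu, hv⟩ := ih h2
    exact ⟨w1 ++ b :: u, v, by simp, sfa_cons_iff.mpr ⟨w1, b, u, rfl, hb, hu⟩, hv⟩

theorem sfa_comp {r : α → β → Prop} {s : β → γ → Prop} {L : List α} {w : List β} {w' : List γ}
    (h1 : SublistForall₂ r L w) (h2 : SublistForall₂ s w w') :
    SublistForall₂ (fun x z => ∃ y, r x y ∧ s y z) L w' := by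
  induction h2 generalizing L with
  | nil => cases h1 with | nil => exact .nil
  | cons hs htail ih =>
    cases h1 with
    | nil => exact .nil
    | cons hr h1' => exact .cons ⟨_, hr, hs⟩ (ih h1')
    | cons_right h1' => exact .cons_right (ih h1')
  | cons_right _ ih => exact .cons_right (ih h1)

theorem sfa_mono' {r s : α → β → Prop} {L : List α} {w : List β}
    (h : SublistForall₂ r L w) (hm : ∀ x ∈ L, ∀ y, r x y → s x y) :
    SublistForall₂ s L w := by
  induction h with
  | nil => exact .nil
  | cons hr _ ih =>
    exact .cons (hm _ (List.mem_cons_self) _ hr)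
      (ih fun x hx => hm x (List.mem_cons_of_mem _ hx))
  | cons_right _ ih => exact .cons_right (ih hm)

theorem mem_openword {L : List (Set α)} {w : List α} :
    w ∈ openword L ↔ SublistForall₂ (fun U a => a ∈ U) L w := by
  induction L generalizing w with
  | nil => exact ⟨fun _ => .nil, fun _ => trivial⟩
  | cons U L ih =>
    rw [sfa_cons_iff]
    constructor
    · rintro ⟨u, -, v, ⟨x, ⟨a, ha, rfl⟩, y, hy, rfl⟩, rfl⟩
      exact ⟨u, a, y, rfl, ha, ih.mp hy⟩
    · rintro ⟨w1, b, w2, rfl, hb, h⟩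
      exact ⟨w1, trivial, b :: w2, ⟨[b], ⟨b, hb, rfl⟩, w2, ih.mpr h, rfl⟩, rfl⟩

variable {θ : TopologicalSpace α}

theorem wordEmb_refl (w : List α) : wordEmb θ w w :=
  sfa_refl (fun _ _ _ h => h) w

theorem openword_upClosed {L : List (Set α)} (hL : ∀ U ∈ L, θ.IsOpen U) :
    ∀ u ∈ openword L, ∀ w, wordEmb θ u w → w ∈ openword L := by
  intro u hu w hw
  rw [mem_openword] at hu ⊢
  exact sfa_mono' (sfa_comp hu hw)
    (fun U hU a ⟨b, hb, hba⟩ => hba U (hL U hU) hb)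

theorem cat_openword {L M : List (Set α)} :
    cat (openword L) (openword M) = openword (L ++ M) := by
  ext w
  constructor
  · rintro ⟨u, hu, v, hv, rfl⟩
    exact mem_openword.mpr (sfa_append (mem_openword.mp hu) (mem_openword.mp hv))
  · intro h
    obtain ⟨u, v, rfl, hu, hv⟩ := sfa_split (mem_openword.mp h)
    exact ⟨u, mem_openword.mpr hu, v, mem_openword.mpr hv, rfl⟩

theorem upEmb_eq_self {S : Set (List α)}
    (h : ∀ u ∈ S, ∀ w, wordEmb θ u w → w ∈ S) : upEmb θ S = S := by
  ext w
  constructor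
  · rintro ⟨u, hu, huw⟩; exact h u hu w huw
  · intro hw; exact ⟨w, hw, wordEmb_refl w⟩

theorem cat_upClosed {U V : Set (List α)}
    (hU : ∀ u ∈ U, ∀ w, wordEmb θ u w → w ∈ U)
    (hV : ∀ u ∈ V, ∀ w, wordEmb θ u w → w ∈ V) :
    ∀ u ∈ cat U V, ∀ w, wordEmb θ u w → w ∈ cat U V := by
  rintro _ ⟨a, ha, b, hb, rfl⟩ w hw
  obtain ⟨w1, w2, rfl, h1, h2⟩ := sfa_split hw
  exact ⟨w1, hU a ha w1 h1, w2, hV b hb w2 h2, rfl⟩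

theorem upEmb_lift1 {U : Set α} (hU : θ.IsOpen U) :
    upEmb θ (lift1 U) = openword [U] := by
  ext w
  constructor
  · rintro ⟨u, ⟨a, ha, rfl⟩, hw⟩
    obtain ⟨w1, b, w2, rfl, hb, -⟩ := sfa_cons_iff.mp hw
    exact mem_openword.mpr (sfa_cons_iff.mpr ⟨w1, b, w2, rfl, hb U hU ha, .nil⟩)
  · intro hw
    obtain ⟨w1, b, w2, rfl, hb, -⟩ := sfa_cons_iff.mp (mem_openword.mp hw)
    exact ⟨[b], ⟨b, hb, rfl⟩, sfa_cons_iff.mpr ⟨w1, b, w2, rfl, fun _ _ h => h, .nil⟩⟩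

theorem subword_open_upClosed {W : Set (List α)} (h : (subwordTop θ).IsOpen W) :
    ∀ u ∈ W, ∀ w, wordEmb θ u w → w ∈ W := by
  have h' : GenerateOpen {V | ∃ L : List (Set α), (∀ U ∈ L, θ.IsOpen U) ∧ V = openword L} W := h
  clear h
  induction h' with
  | basic V hV => obtain ⟨L, hL, rfl⟩ := hV; exact openword_upClosed hL
  | univ => intro u _ w _; trivial
  | inter _ _ _ _ ih1 ih2 => exact fun u hu w hw => ⟨ih1 u hu.1 w hw, ih2 u hu.2 w hw⟩
  | sUnion S _ ih => rintro u ⟨T, hT, hu⟩ w hw; exact ⟨T, hT, ih T hT u hu w hw⟩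

end Aux

section Aux2

open List TopologicalSpace

variable {α : Type*} {θ : TopologicalSpace α}

theorem wordEmb_prefix (u v : List α) : wordEmb θ u (u ++ v) :=
  sfa_append_right v (wordEmb_refl u)

theorem wordEmb_suffix (u v : List α) : wordEmb θ v (u ++ v) :=
  sfa_pad u (wordEmb_refl v)

theorem cat_inter_left {U₁ U₂ V : Set (List α)}
    (h1 : ∀ u ∈ U₁, ∀ w, wordEmb θ u w → w ∈ U₁)
    (h2 : ∀ u ∈ U₂, ∀ w, wordEmb θ u w → w ∈ U₂) :
    cat (U₁ ∩ U₂) V = cat U₁ V ∩ cat U₂ V := by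
  ext w
  constructor
  · rintro ⟨a, ⟨ha1, ha2⟩, b, hb, rfl⟩
    exact ⟨⟨a, ha1, b, hb, rfl⟩, ⟨a, ha2, b, hb, rfl⟩⟩
  · rintro ⟨⟨a, ha1, b, hb, hab⟩, ⟨c, hc2, d, hd, hcd⟩⟩
    rcases List.append_eq_append_iff.mp (hab.symm.trans hcd) with ⟨m, hc, _⟩ | ⟨m, hc, _⟩
    · subst hc
      exact ⟨a ++ m, ⟨h1 a ha1 _ (wordEmb_prefix a m), hc2⟩, d, hd, hcd⟩
    · subst hc
      exact ⟨c ++ m, ⟨ha1, h2 c hc2 _ (wordEmb_prefix c m)⟩, b, hb, hab⟩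

theorem cat_inter_right {U V₁ V₂ : Set (List α)}
    (h1 : ∀ u ∈ V₁, ∀ w, wordEmb θ u w → w ∈ V₁)
    (h2 : ∀ u ∈ V₂, ∀ w, wordEmb θ u w → w ∈ V₂) :
    cat U (V₁ ∩ V₂) = cat U V₁ ∩ cat U V₂ := by
  ext w
  constructor
  · rintro ⟨a, ha, b, ⟨hb1, hb2⟩, rfl⟩
    exact ⟨⟨a, ha, b, hb1, rfl⟩, ⟨a, ha, b, hb2, rfl⟩⟩
  · rintro ⟨⟨a, ha, b, hb1, hab⟩, ⟨c, hc, d, hd2, hcd⟩⟩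
    rcases List.append_eq_append_iff.mp (hab.symm.trans hcd) with ⟨m, _, hbmd⟩ | ⟨m, _, hdmb⟩
    · subst hbmd
      exact ⟨a, ha, m ++ d, ⟨hb1, h2 d hd2 _ (wordEmb_suffix m d)⟩, hab⟩
    · subst hdmb
      exact ⟨c, hc, m ++ b, ⟨h1 b hb1 _ (wordEmb_suffix m b), hd2⟩, hcd⟩

theorem cat_sUnion_left {S : Set (Set (List α))} {V : Set (List α)} :
    cat (⋃₀ S) V = ⋃₀ ((fun T => cat T V) '' S) := by
  ext w
  constructor
  · rintro ⟨a, ⟨T, hT, ha⟩, b, hb, rfl⟩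
    exact ⟨cat T V, ⟨T, hT, rfl⟩, a, ha, b, hb, rfl⟩
  · rintro ⟨_, ⟨T, hT, rfl⟩, a, ha, b, hb, rfl⟩
    exact ⟨a, ⟨T, hT, ha⟩, b, hb, rfl⟩

theorem cat_sUnion_right {S : Set (Set (List α))} {U : Set (List α)} :
    cat U (⋃₀ S) = ⋃₀ ((fun T => cat U T) '' S) := by
  ext w
  constructor
  · rintro ⟨a, ha, b, ⟨T, hT, hb⟩, rfl⟩
    exact ⟨cat U T, ⟨T, hT, rfl⟩, a, ha, b, hb, rfl⟩
  · rintro ⟨_, ⟨T, hT, rfl⟩, a, ha, b, hb, rfl⟩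
    exact ⟨a, ha, b, ⟨T, hT, hb⟩, rfl⟩

theorem open_cat {U V : Set (List α)}
    (hU : (subwordTop θ).IsOpen U) (hV : (subwordTop θ).IsOpen V) :
    (subwordTop θ).IsOpen (cat U V) := by
  set G : Set (Set (List α)) :=
    {V | ∃ L : List (Set α), (∀ U ∈ L, θ.IsOpen U) ∧ V = openword L} with hG
  have key : ∀ M : List (Set α), (∀ W ∈ M, θ.IsOpen W) →
      ∀ U : Set (List α), (subwordTop θ).IsOpen U →
        (subwordTop θ).IsOpen (cat U (openword M)) := by
    intro M hM U hU
    have hU' : GenerateOpen G U := hU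
    clear hU
    induction hU' with
    | basic T hT =>
      obtain ⟨L, hL, rfl⟩ := hT
      rw [cat_openword]
      exact GenerateOpen.basic _ ⟨L ++ M, fun W hW =>
        (List.mem_append.mp hW).elim (hL W) (hM W), rfl⟩
    | univ =>
      have h0 : cat Set.univ (openword M) = openword M := cat_openword (L := []) (M := M)
      rw [h0]
      exact GenerateOpen.basic _ ⟨M, hM, rfl⟩
    | inter s t hs ht ihs iht =>
      rw [cat_inter_left (subword_open_upClosed (θ := θ) hs)
        (subword_open_upClosed (θ := θ) ht)]
      exact GenerateOpen.inter _ _ ihs iht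
    | sUnion S hS ih =>
      rw [cat_sUnion_left]
      exact GenerateOpen.sUnion _ (by rintro _ ⟨T, hT, rfl⟩; exact ih T hT)
  have hV' : GenerateOpen G V := hV
  clear hV
  induction hV' with
  | basic T hT =>
    obtain ⟨M, hM, rfl⟩ := hT
    exact key M hM U hU
  | univ =>
    have h0 : cat U Set.univ = cat U (openword ([] : List (Set α))) := rfl
    rw [h0]
    exact key [] (by simp) U hU
  | inter s t hs ht ihs iht =>
    rw [cat_inter_right (subword_open_upClosed (θ := θ) hs)
      (subword_open_upClosed (θ := θ) ht)]
    exact GenerateOpen.inter _ _ ihs iht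
  | sUnion S hS ih =>
    rw [cat_sUnion_right]
    exact GenerateOpen.sUnion _ (by rintro _ ⟨T, hT, rfl⟩; exact ih T hT)

end Aux2


open TopologicalSpace in
theorem stmt15 {α : Type*} (θ : TopologicalSpace α) :
    Esub θ (subwordTop θ) = subwordTop θ ∧
      ∀ σ : TopologicalSpace (List α), Esub θ σ = σ →
        ∀ W : Set (List α), (subwordTop θ).IsOpen W → σ.IsOpen W := by
  set G : Set (Set (List α)) :=
    {V | ∃ L : List (Set α), (∀ U ∈ L, θ.IsOpen U) ∧ V = openword L} with hG
  have hopword : ∀ (σ : TopologicalSpace (List α)),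
      (∀ U : Set α, θ.IsOpen U → σ.IsOpen (upEmb θ (lift1 U))) →
      (∀ U V : Set (List α), σ.IsOpen U → σ.IsOpen V → σ.IsOpen (upEmb θ (cat U V))) →
      ∀ L : List (Set α), (∀ U ∈ L, θ.IsOpen U) → σ.IsOpen (openword L) := by
    intro σ hlift hcat L
    induction L with
    | nil => intro _; exact σ.isOpen_univ
    | cons U L ih =>
      intro hUL
      have hU : θ.IsOpen U := hUL U (List.mem_cons_self)
      have hL : ∀ V ∈ L, θ.IsOpen V := fun V hV => hUL V (List.mem_cons_of_mem _ hV)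
      have h1 : σ.IsOpen (openword [U]) := by
        rw [← upEmb_lift1 hU]; exact hlift U hU
      have h2 : σ.IsOpen (openword L) := ih hL
      have heq : upEmb θ (cat (openword [U]) (openword L)) = openword (U :: L) := by
        rw [cat_openword (L := [U]) (M := L)]
        exact upEmb_eq_self (openword_upClosed hUL)
      rw [← heq]
      exact hcat _ _ h1 h2
  constructor
  · apply le_antisymm
    · -- Esub θ (subwordTop θ) ≤ subwordTop θ
      apply le_generateFrom
      rintro s ⟨L, hL, rfl⟩
      induction L with
      | nil => exact (Esub θ (subwordTop θ)).isOpen_univ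
      | cons U L ih =>
        have hU : θ.IsOpen U := hL U (List.mem_cons_self)
        have hL' : ∀ V ∈ L, θ.IsOpen V := fun V hV => hL V (List.mem_cons_of_mem _ hV)
        have heq : upEmb θ (cat (openword [U]) (openword L)) = openword (U :: L) := by
          rw [cat_openword (L := [U]) (M := L)]
          exact upEmb_eq_self (openword_upClosed hL)
        rw [← heq]
        refine GenerateOpen.basic _ (Or.inl ⟨openword [U], openword L, ?_, ?_, rfl⟩)
        · exact GenerateOpen.basic _ ⟨[U], by simpa using hU, rfl⟩
        · exact GenerateOpen.basic _ ⟨L, hL', rfl⟩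
    · -- subwordTop θ ≤ Esub θ (subwordTop θ)
      apply le_generateFrom
      rintro s (⟨U, V, hU, hV, rfl⟩ | ⟨W, hW, rfl⟩)
      · rw [upEmb_eq_self (cat_upClosed (subword_open_upClosed hU) (subword_open_upClosed hV))]
        exact open_cat hU hV
      · rw [upEmb_lift1 hW]
        exact GenerateOpen.basic _ ⟨[W], by simpa using hW, rfl⟩
  · intro σ hfix W hW
    have hlift : ∀ U : Set α, θ.IsOpen U → σ.IsOpen (upEmb θ (lift1 U)) := by
      intro U hU
      have : (Esub θ σ).IsOpen (upEmb θ (lift1 U)) :=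
        GenerateOpen.basic _ (Or.inr ⟨U, hU, rfl⟩)
      rwa [hfix] at this
    have hcat : ∀ U V : Set (List α), σ.IsOpen U → σ.IsOpen V →
        σ.IsOpen (upEmb θ (cat U V)) := by
      intro U V hU hV
      have : (Esub θ σ).IsOpen (upEmb θ (cat U V)) :=
        GenerateOpen.basic _ (Or.inl ⟨U, V, hU, hV, rfl⟩)
      rwa [hfix] at this
    have hW' : GenerateOpen G W := hW
    clear hW
    induction hW' with
    | basic T hT => obtain ⟨L, hL, rfl⟩ := hT; exact hopword σ hlift hcat L hL
    | univ => exact σ.isOpen_univ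
    | inter s t _ _ ihs iht => exact σ.isOpen_inter _ _ ihs iht
    | sUnion S _ ih => exact σ.isOpen_sUnion _ ih
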